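/- For every natural number n there exists a natural number N such that every finite simple group containing an involution whose centralizer has order at most n has order at most N. (Equivalently, there are only finitely many finite simple groups containing an involution with centralizer of a given finite size.) -/

import Mathlib

open Finset

section aux
variable {G : Type} [Group G] [Finite G]

/-- Elements conjugating `x` to a fixed `y` number at most the centralizer's cardinality. -/
lemma aux_conj_card (x y : G) (s : Finset G) (hs : ∀ a ∈ s, a * x * a⁻¹ = y) :
    s.card ≤ Nat.card (Subgroup.centralizer ({x} : Set G)) := by
  classical
  have := Fintype.ofFinite G
  rcases s.eq_empty_or_nonempty with rfl | ⟨a₀, ha₀⟩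
  · simp
  · have key : ∀ a ∈ s, a₀⁻¹ * a ∈ Subgroup.centralizer ({x} : Set G) := by
      intro a ha
      rw [Subgroup.mem_centralizer_singleton_iff]
      have h12 : a * x * a⁻¹ = a₀ * x * a₀⁻¹ := (hs a ha).trans (hs a₀ ha₀).symm
      have h3 : (a₀⁻¹ * a) * x * (a₀⁻¹ * a)⁻¹ = x := by
        rw [mul_inv_rev, inv_inv]
        calc a₀⁻¹ * a * x * (a⁻¹ * a₀) = a₀⁻¹ * (a * x * a⁻¹) * a₀ := by group
          _ = a₀⁻¹ * (a₀ * x * a₀⁻¹) * a₀ := by rw [h12]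
          _ = x := by group
      exact mul_inv_eq_iff_eq_mul.mp h3
    have hcard : Nat.card (Subgroup.centralizer ({x} : Set G)) =
        (Finset.univ.filter (· ∈ Subgroup.centralizer ({x} : Set G))).card := by
      rw [Nat.card_eq_fintype_card, Fintype.card_subtype]
    rw [hcard]
    apply Finset.card_le_card_of_injOn (fun a => a₀⁻¹ * a)
    · intro a ha
      simp only [Finset.mem_filter, Finset.mem_univ, true_and]
      exact Finset.mem_coe.mpr (Finset.mem_filter.mpr ⟨Finset.mem_univ _, key a ha⟩)
    · intro a _ b _ h
      exact mul_left_cancel h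

end aux

/-- There are only finitely many finite simple groups containing an involution with
centralizer of a given finite size: their orders are uniformly bounded. -/
theorem finite_simple_groups_involution_centralizer_bounded (n : ℕ) :
    ∃ N : ℕ, ∀ (G : Type) [Group G] [Finite G], IsSimpleGroup G →
      (∃ i : G, i ≠ 1 ∧ i ^ 2 = 1 ∧ Nat.card (Subgroup.centralizer ({i} : Set G)) ≤ n) →
      Nat.card G ≤ N := by
  classical
  refine ⟨Nat.factorial (2 * n ^ 2), ?_⟩
  intro G _ _ hG ⟨i, hi1, hi2, hc⟩
  have := Fintype.ofFinite G
  have hiself : i⁻¹ = i := by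
    rw [← mul_eq_one_iff_inv_eq, ← pow_two, hi2]
  have hn2 : 2 ≤ n := by
    refine le_trans ?_ hc
    rw [Nat.succ_le_iff, Nat.card_eq_fintype_card, Fintype.one_lt_card_iff_nontrivial]
    exact ⟨⟨1, Subgroup.one_mem _⟩, ⟨i, Subgroup.mem_centralizer_singleton_iff.mpr rfl⟩,
      by simp [Subtype.ext_iff, hi1.symm]⟩
  set g := Nat.card G with hg
  have hg2 : 2 ≤ g := by
    rw [Nat.succ_le_iff, hg, Nat.card_eq_fintype_card, Fintype.one_lt_card_iff_nontrivial]
    exact ⟨i, 1, hi1⟩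
  by_cases hcen : Subgroup.centralizer ({i} : Set G) = ⊤
  · -- i is central: G is cyclic of order 2
    have hznorm : (Subgroup.zpowers i).Normal := by
      constructor
      intro p hp q
      obtain ⟨k, rfl⟩ := Subgroup.mem_zpowers_iff.mp hp
      have hq : q ∈ Subgroup.centralizer ({i} : Set G) := hcen ▸ Subgroup.mem_top q
      rw [Subgroup.mem_centralizer_singleton_iff] at hq
      have hfix : q * i * q⁻¹ = i := by rw [hq]; group
      have : q * i ^ k * q⁻¹ = i ^ k := by
        have h := map_zpow (MulAut.conj q) i k
        simpa [MulAut.conj_apply, hfix] using h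
      rw [this]
      exact Subgroup.mem_zpowers_iff.mpr ⟨k, rfl⟩
    rcases hG.eq_bot_or_eq_top_of_normal _ hznorm with hb | ht
    · exact absurd (hb ▸ Subgroup.mem_zpowers i) (by simpa using hi1)
    · have hcycl : g = orderOf i := by
        rw [hg, ← Nat.card_zpowers, ht, Subgroup.card_top]
      have ho : orderOf i = 2 := orderOf_eq_prime hi2 hi1
      rw [hcycl, ho]
      calc 2 ≤ 2 * n ^ 2 := by nlinarith
        _ ≤ Nat.factorial (2 * n ^ 2) := Nat.self_le_factorial _
  · -- main case: Brauer–Fowler counting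
    -- the set of involutions
    set I : Finset G := Finset.univ.filter (fun j => j ≠ 1 ∧ j ^ 2 = 1) with hI
    set t := I.card with ht
    -- t * n ≥ g : the conjugacy class of i consists of involutions, fibers are centralizer cosets
    have hconjmem : ∀ a : G, a * i * a⁻¹ ∈ I := by
      intro a
      simp only [hI, Finset.mem_filter, Finset.mem_univ, true_and]
      constructor
      · intro h
        apply hi1
        have := congrArg (fun z => a⁻¹ * z * a) h
        simpa [mul_assoc] using this
      · have : (a * i * a⁻¹) ^ 2 = a * i ^ 2 * a⁻¹ := by
          rw [pow_two, pow_two]; group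
        rw [this, hi2]; group
    have hstep1 : g ≤ n * t := by
      have := Finset.card_le_mul_card_image (f := fun a : G => a * i * a⁻¹)
        (Finset.univ : Finset G) n ?_
      · refine le_trans (by simpa [hg, Nat.card_eq_fintype_card] using this) ?_
        apply Nat.mul_le_mul_left
        apply Finset.card_le_card
        intro b hb
        simp only [Finset.mem_image, Finset.mem_univ, true_and] at hb
        obtain ⟨a, rfl⟩ := hb
        exact hconjmem a
      · intro b _
        refine le_trans (aux_conj_card i b _ ?_) hc
        intro a ha
        simpa using (Finset.mem_filter.mp ha).2
    -- t ≥ 2 : i is not central, so it has a distinct conjugate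
    have ht2 : 2 ≤ t := by
      rw [Subgroup.eq_top_iff'] at hcen
      push_neg at hcen
      obtain ⟨a, haa⟩ := hcen
      rw [Subgroup.mem_centralizer_singleton_iff] at haa
      have hne : a * i * a⁻¹ ≠ i := by
        intro h
        apply haa
        have := congrArg (· * a) h
        simpa [mul_assoc] using this
      have hsub : ({i, a * i * a⁻¹} : Finset G) ⊆ I := by
        intro x hx
        rcases Finset.mem_insert.mp hx with rfl | hx
        · simp only [hI, Finset.mem_filter, Finset.mem_univ, true_and]; exact ⟨hi1, hi2⟩
        · rw [Finset.mem_singleton] at hx; subst hx; exact hconjmem a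
      calc 2 = ({i, a * i * a⁻¹} : Finset G).card := by
              rw [Finset.card_insert_of_notMem (by simpa using (Ne.symm hne)), Finset.card_singleton]
        _ ≤ t := Finset.card_le_card hsub
    -- double counting: pairs of distinct involutions inject into (x, inverting involution)
    set E : Finset G := Finset.univ.erase 1 with hE
    set f : G → ℕ := fun x => (I.filter (fun j => j * x * j⁻¹ = x⁻¹)).card with hf
    have hsum : t * (t - 1) ≤ ∑ x ∈ E, f x := by
      have hcardP : I.offDiag.card = t * (t - 1) := by
        rw [Finset.offDiag_card, ← ht, Nat.mul_sub_one]
      rw [← hcardP, ← Finset.card_sigma (E) (fun x => I.filter (fun j => j * x * j⁻¹ = x⁻¹))]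
      apply Finset.card_le_card_of_injOn
        (fun p => (⟨p.1 * p.2, p.1⟩ : (_ : G) × G))
      · intro p hp
        rw [Finset.mem_coe, Finset.mem_offDiag] at hp
        obtain ⟨hp1, hp2, hpne⟩ := hp
        simp only [hI, Finset.mem_filter, Finset.mem_univ, true_and] at hp1 hp2
        have h1inv : (p.1)⁻¹ = p.1 := by rw [← mul_eq_one_iff_inv_eq, ← pow_two, hp1.2]
        have h2inv : (p.2)⁻¹ = p.2 := by rw [← mul_eq_one_iff_inv_eq, ← pow_two, hp2.2]
        rw [Finset.mem_coe, Finset.mem_sigma]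
        constructor
        · rw [hE, Finset.mem_erase]
          refine ⟨?_, Finset.mem_univ _⟩
          intro h
          apply hpne
          have h' : p.1 = (p.2)⁻¹ := mul_eq_one_iff_eq_inv.mp h
          rw [h', h2inv]
        · rw [Finset.mem_filter]
          refine ⟨by simp only [hI, Finset.mem_filter, Finset.mem_univ, true_and]; exact hp1, ?_⟩
          show p.1 * (p.1 * p.2) * (p.1)⁻¹ = (p.1 * p.2)⁻¹
          rw [mul_inv_rev, h1inv, h2inv]
          calc p.1 * (p.1 * p.2) * p.1 = (p.1 * p.1) * p.2 * p.1 := by group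
            _ = p.2 * p.1 := by rw [← pow_two, hp1.2]; group
      · intro p _ q _ hpq
        have h2 : p.1 = q.1 := congrArg (fun s => s.2) hpq
        have h1 : p.1 * p.2 = q.1 * q.2 := congrArg (fun s => s.1) hpq
        rw [h2] at h1
        have h3 : p.2 = q.2 := mul_left_cancel h1
        exact Prod.ext h2 h3
    -- pigeonhole: get x ≠ 1 with (g-1) * f x ≥ t(t-1)
    have hEne : E.Nonempty := by
      refine ⟨i, ?_⟩
      rw [hE, Finset.mem_erase]
      exact ⟨hi1, Finset.mem_univ _⟩
    obtain ⟨b, hbE, hbmax⟩ := Finset.exists_max_image E f hEne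
    have hEcard : E.card = g - 1 := by
      rw [hE, Finset.card_erase_of_mem (Finset.mem_univ _)]
      simp [hg, Nat.card_eq_fintype_card]
    have hpigeon : t * (t - 1) ≤ (g - 1) * f b := by
      refine le_trans hsum ?_
      rw [← hEcard]
      calc ∑ x ∈ E, f x ≤ ∑ _x ∈ E, f b := Finset.sum_le_sum (fun x hx => hbmax x hx)
        _ = E.card * f b := by rw [Finset.sum_const, smul_eq_mul]
    -- f b ≤ card of centralizer of b
    set c := Nat.card (Subgroup.centralizer ({b} : Set G)) with hcdef
    have hfb : f b ≤ c := by
      apply aux_conj_card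
      intro a ha
      exact (Finset.mem_filter.mp ha).2
    have hb1 : b ≠ 1 := by
      rw [hE, Finset.mem_erase] at hbE
      exact hbE.1
    -- centralizer of b is proper
    have hbprop : Subgroup.centralizer ({b} : Set G) ≠ ⊤ := by
      intro htop
      -- then zpowers b is normal, so = ⊤, so G abelian hence centralizer of i = ⊤, contradiction
      have hznorm : (Subgroup.zpowers b).Normal := by
        constructor
        intro p hp q
        obtain ⟨k, rfl⟩ := Subgroup.mem_zpowers_iff.mp hp
        have hq : q ∈ Subgroup.centralizer ({b} : Set G) := htop ▸ Subgroup.mem_top q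
        rw [Subgroup.mem_centralizer_singleton_iff] at hq
        have hfix : q * b * q⁻¹ = b := by rw [hq]; group
        have : q * b ^ k * q⁻¹ = b ^ k := by
          have h := map_zpow (MulAut.conj q) b k
          simpa [MulAut.conj_apply, hfix] using h
        rw [this]
        exact Subgroup.mem_zpowers_iff.mpr ⟨k, rfl⟩
      rcases hG.eq_bot_or_eq_top_of_normal _ hznorm with hbb | htt
      · exact absurd (hbb ▸ Subgroup.mem_zpowers b) (by simpa using hb1)
      · -- G = zpowers b is abelian, so centralizer {i} = ⊤, contradiction with hcen
        apply hcen
        rw [Subgroup.eq_top_iff']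
        intro q
        rw [Subgroup.mem_centralizer_singleton_iff]
        have hqmem : q ∈ Subgroup.zpowers b := htt ▸ Subgroup.mem_top q
        have himem : i ∈ Subgroup.zpowers b := htt ▸ Subgroup.mem_top i
        obtain ⟨k, rfl⟩ := Subgroup.mem_zpowers_iff.mp hqmem
        obtain ⟨m, rfl⟩ := Subgroup.mem_zpowers_iff.mp himem
        rw [← zpow_add, ← zpow_add, add_comm]
    -- index bound: index of centralizer of b is < 2n²
    set k := (Subgroup.centralizer ({b} : Set G)).index with hk
    have hck : c * k = g := Subgroup.card_mul_index _
    have hcpos : 0 < c := Nat.card_pos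
    have hklt : k ≤ 2 * n ^ 2 := by
      -- 2 n² (g-1) c ≥ 2 n² t(t-1) ≥ n² t² ≥ g² > (g-1) g
      have h1 : g ^ 2 ≤ 2 * n ^ 2 * (t * (t - 1)) := by
        have htt : t ^ 2 ≤ 2 * (t * (t - 1)) := by nlinarith [Nat.sub_add_cancel (le_trans one_le_two ht2)]
        calc g ^ 2 ≤ (n * t) ^ 2 := Nat.pow_le_pow_left hstep1 2
          _ = n ^ 2 * t ^ 2 := by ring
          _ ≤ n ^ 2 * (2 * (t * (t - 1))) := Nat.mul_le_mul_left _ htt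
          _ = 2 * n ^ 2 * (t * (t - 1)) := by ring
      have h2 : g ^ 2 ≤ 2 * n ^ 2 * ((g - 1) * c) :=
        le_trans h1 (Nat.mul_le_mul_left _ (le_trans hpigeon (Nat.mul_le_mul_left _ hfb)))
      have h3 : (g - 1) * g < (g - 1) * (2 * n ^ 2 * c) := by
        have : (g - 1) * g < g ^ 2 := by
          have : g - 1 < g := by omega
          nlinarith
        calc (g - 1) * g < g ^ 2 := this
          _ ≤ 2 * n ^ 2 * ((g - 1) * c) := h2
          _ = (g - 1) * (2 * n ^ 2 * c) := by ring
      have h4 : g < 2 * n ^ 2 * c := by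
        have hgm : 0 < g - 1 := by omega
        exact lt_of_mul_lt_mul_left h3 (Nat.zero_le _)
      have h5 : k * c < 2 * n ^ 2 * c := by
        rw [mul_comm k c, hck]; exact h4
      exact le_of_lt (lt_of_mul_lt_mul_right h5 (Nat.zero_le _))
    -- faithful action on cosets: g ≤ k!
    have hemb : g ≤ Nat.factorial k := by
      set H := Subgroup.centralizer ({b} : Set G) with hH
      have hker : H.normalCore = ⊥ := by
        rcases hG.eq_bot_or_eq_top_of_normal _ (Subgroup.normalCore_normal H) with h | h
        · exact h
        · exact absurd (le_trans h.symm.le (Subgroup.normalCore_le H) : (⊤ : Subgroup G) ≤ H)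
            (fun hle => hbprop (top_le_iff.mp hle))
      have hinj : Function.Injective (MulAction.toPermHom G (G ⧸ H)) := by
        rw [← MonoidHom.ker_eq_bot_iff, ← Subgroup.normalCore_eq_ker, hker]
      calc g ≤ Nat.card (Equiv.Perm (G ⧸ H)) := Nat.card_le_card_of_injective _ hinj
        _ = Nat.factorial (Nat.card (G ⧸ H)) := by
            rw [Nat.card_eq_fintype_card, Nat.card_eq_fintype_card, Fintype.card_perm]
        _ = Nat.factorial k := rfl
    exact le_trans hemb (Nat.factorial_le hklt)
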